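/- Let (x*, y*) be a KKT point of (SPOcp) such that SP-MFCQ holds at x*. Then there exist α* > 0 and ε > 0 such that for every α ≥ α*, every KKT point (x, y) of (Pen(α)) with ‖(x, y) − (x*, y*)‖ < ε is a KKT point of (SPOcp). -/

import Mathlib

open Filter Topology

noncomputable section

/-- Euclidean n-space. -/
abbrev E (n : ℕ) : Type := EuclideanSpace ℝ (Fin n)

/-- SP-MFCQ at x*: positive linear independence of the gradients of the
active inequality constraints, the equality constraints and the unit vectors
e_i, i ∈ I₀(x*). -/
def SPMFCQ {n m q : ℕ} (g : Fin m → E n → ℝ) (h : Fin q → E n → ℝ)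
    (xstar : E n) : Prop :=
  ∀ (lam : Fin m → ℝ) (mu : Fin q → ℝ) (gam : Fin n → ℝ),
    (∀ i, 0 ≤ lam i) → (∀ i, g i xstar ≠ 0 → lam i = 0) →
    (∀ i, xstar i ≠ 0 → gam i = 0) →
    (∑ i, lam i • gradient (g i) xstar) + (∑ j, mu j • gradient (h j) xstar) +
      (∑ i, gam i • (EuclideanSpace.single i (1 : ℝ) : E n)) = 0 →
    lam = 0 ∧ mu = 0 ∧ gam = 0

/-- KKT point of the complementarity reformulation (SPOcp). -/
def KKTcp {n m q : ℕ} (f : E n → ℝ) (g : Fin m → E n → ℝ) (h : Fin q → E n → ℝ)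
    (p : Fin n → ℝ → ℝ) (x y : E n) : Prop :=
  (∀ i, g i x ≤ 0) ∧ (∀ j, h j x = 0) ∧ (∀ i, 0 ≤ x i) ∧ (∀ i, 0 ≤ y i) ∧
  (∀ i, x i * y i = 0) ∧
  ∃ (lam : Fin m → ℝ) (mu : Fin q → ℝ) (νx νy γ : Fin n → ℝ),
    (∀ i, 0 ≤ lam i) ∧ (∀ i, lam i * g i x = 0) ∧
    (∀ i, 0 ≤ νx i) ∧ (∀ i, νx i * x i = 0) ∧
    (∀ i, 0 ≤ νy i) ∧ (∀ i, νy i * y i = 0) ∧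
    (∀ k, gradient f x k + (∑ i, lam i * gradient (g i) x k) +
        (∑ j, mu j * gradient (h j) x k) - νx k + γ k * y k = 0) ∧
    (∀ i, deriv (p i) (y i) - νy i + γ i * x i = 0)

/-- KKT point of the penalized problem (Pen(α)). -/
def KKTpen {n m q : ℕ} (f : E n → ℝ) (g : Fin m → E n → ℝ) (h : Fin q → E n → ℝ)
    (p : Fin n → ℝ → ℝ) (α : ℝ) (x y : E n) : Prop :=
  (∀ i, g i x ≤ 0) ∧ (∀ j, h j x = 0) ∧ (∀ i, 0 ≤ x i) ∧ (∀ i, 0 ≤ y i) ∧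
  ∃ (lam : Fin m → ℝ) (mu : Fin q → ℝ) (νx νy : Fin n → ℝ),
    (∀ i, 0 ≤ lam i) ∧ (∀ i, lam i * g i x = 0) ∧
    (∀ i, 0 ≤ νx i) ∧ (∀ i, νx i * x i = 0) ∧
    (∀ i, 0 ≤ νy i) ∧ (∀ i, νy i * y i = 0) ∧
    (∀ k, gradient f x k + (∑ i, lam i * gradient (g i) x k) +
        (∑ j, mu j * gradient (h j) x k) + α * y k - νx k = 0) ∧
    (∀ i, deriv (p i) (y i) + α * x i - νy i = 0)

section auxiliary

variable {n m q : ℕ}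

/-- The gradient of a C¹ function is continuous. -/
lemma aux_grad_cont {φ : E n → ℝ} (hφ : ContDiff ℝ 1 φ) :
    Continuous (fun x => gradient φ x) := by
  have h1 : Continuous (fun x => fderiv ℝ φ x) := hφ.continuous_fderiv one_ne_zero
  exact (InnerProductSpace.toDual ℝ (E n)).symm.continuous.comp h1

/-- Coordinates of finite sums of scalar multiples in Euclidean space. -/
lemma aux_sum_smul_apply {ι : Type*} (t : Finset ι) (w : ι → ℝ) (v : ι → E n) (k : Fin n) :
    (∑ i ∈ t, w i • v i) k = ∑ i ∈ t, w i * (v i k) := by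
  classical
  induction t using Finset.induction with
  | empty => simp [PiLp.zero_apply]
  | @insert a s ha ih =>
      rw [Finset.sum_insert ha, Finset.sum_insert ha, PiLp.add_apply, PiLp.smul_apply, ih]
      simp

/-- Quantitative version of SP-MFCQ obtained by compactness. -/
lemma aux_exists_c0 (g : Fin m → E n → ℝ) (h : Fin q → E n → ℝ) (xstar : E n)
    (hmfcq : SPMFCQ g h xstar) :
    ∃ c0 > (0:ℝ), ∀ (lam : Fin m → ℝ) (mu : Fin q → ℝ) (gam : Fin n → ℝ),
      (∀ i, 0 ≤ lam i) → (∀ i, g i xstar ≠ 0 → lam i = 0) → (∀ i, xstar i ≠ 0 → gam i = 0) →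
      c0 * ((∑ i, |lam i|) + (∑ j, |mu j|) + (∑ i, |gam i|)) ≤
        ‖(∑ i, lam i • gradient (g i) xstar) + (∑ j, mu j • gradient (h j) xstar) +
          (∑ i, gam i • (EuclideanSpace.single i (1 : ℝ) : E n))‖ := by
  classical
  set V := ((Fin m → ℝ) × (Fin q → ℝ) × (Fin n → ℝ)) with hV
  set Φ : V → E n := fun w =>
    (∑ i, w.1 i • gradient (g i) xstar) + (∑ j, w.2.1 j • gradient (h j) xstar) +
      (∑ i, w.2.2 i • (EuclideanSpace.single i (1 : ℝ) : E n)) with hΦ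
  set N : V → ℝ := fun w => (∑ i, |w.1 i|) + (∑ j, |w.2.1 j|) + (∑ i, |w.2.2 i|) with hN
  have hΦcont : Continuous Φ := by
    refine (Continuous.add (Continuous.add ?_ ?_) ?_)
    · exact continuous_finset_sum _ fun i _ =>
        ((continuous_apply i).comp continuous_fst).smul continuous_const
    · exact continuous_finset_sum _ fun j _ =>
        ((continuous_apply j).comp (continuous_fst.comp continuous_snd)).smul continuous_const
    · exact continuous_finset_sum _ fun i _ =>
        ((continuous_apply i).comp (continuous_snd.comp continuous_snd)).smul continuous_const
  have hNcont : Continuous N := by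
    refine (Continuous.add (Continuous.add ?_ ?_) ?_)
    · exact continuous_finset_sum _ fun i _ =>
        ((continuous_apply i).comp continuous_fst).abs
    · exact continuous_finset_sum _ fun j _ =>
        ((continuous_apply j).comp (continuous_fst.comp continuous_snd)).abs
    · exact continuous_finset_sum _ fun i _ =>
        ((continuous_apply i).comp (continuous_snd.comp continuous_snd)).abs
  set S : Set V := {w | ∀ i, 0 ≤ w.1 i} ∩ ({w | ∀ i, g i xstar ≠ 0 → w.1 i = 0} ∩
      ({w | ∀ i, xstar i ≠ 0 → w.2.2 i = 0} ∩ {w | N w = 1})) with hS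
  have hc1 : ∀ (t : ℝ) (w : V) (i : Fin m), (t • w).1 i = t * w.1 i := fun _ _ _ => rfl
  have hc2 : ∀ (t : ℝ) (w : V) (j : Fin q), (t • w).2.1 j = t * w.2.1 j := fun _ _ _ => rfl
  have hc3 : ∀ (t : ℝ) (w : V) (i : Fin n), (t • w).2.2 i = t * w.2.2 i := fun _ _ _ => rfl
  have hΦsmul : ∀ (t : ℝ) (w : V), Φ (t • w) = t • Φ w := by
    intro t w
    simp only [hΦ, hc1, hc2, hc3, mul_smul, smul_add, Finset.smul_sum]
  have hNsmul : ∀ (t : ℝ) (w : V), 0 ≤ t → N (t • w) = t * N w := by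
    intro t w ht
    simp only [hN, hc1, hc2, hc3, abs_mul, abs_of_nonneg ht, ← Finset.mul_sum, mul_add]
  have key : ∃ c0 > (0:ℝ), ∀ w ∈ S, c0 ≤ ‖Φ w‖ := by
    rcases S.eq_empty_or_nonempty with hSe | hSne
    · exact ⟨1, one_pos, by simp [hSe]⟩
    have hclosed : IsClosed S := by
      refine IsClosed.inter ?_ (IsClosed.inter ?_ (IsClosed.inter ?_ ?_))
      · rw [Set.setOf_forall]
        exact isClosed_iInter fun i => isClosed_le continuous_const
          ((continuous_apply i).comp continuous_fst)
      · rw [Set.setOf_forall]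
        refine isClosed_iInter fun i => ?_
        by_cases hgi : g i xstar = 0
        · have : {w : V | g i xstar ≠ 0 → w.1 i = 0} = Set.univ := by ext w; simp [hgi]
          rw [this]; exact isClosed_univ
        · have : {w : V | g i xstar ≠ 0 → w.1 i = 0} = {w | w.1 i = 0} := by ext w; simp [hgi]
          rw [this]
          exact isClosed_eq ((continuous_apply i).comp continuous_fst) continuous_const
      · rw [Set.setOf_forall]
        refine isClosed_iInter fun i => ?_
        by_cases hxi : xstar i = 0
        · have : {w : V | xstar i ≠ 0 → w.2.2 i = 0} = Set.univ := by ext w; simp [hxi]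
          rw [this]; exact isClosed_univ
        · have : {w : V | xstar i ≠ 0 → w.2.2 i = 0} = {w | w.2.2 i = 0} := by ext w; simp [hxi]
          rw [this]
          exact isClosed_eq ((continuous_apply i).comp (continuous_snd.comp continuous_snd))
            continuous_const
      · exact isClosed_eq hNcont continuous_const
    have hbdd : Bornology.IsBounded S := by
      rw [Metric.isBounded_iff_subset_closedBall 0]
      refine ⟨1, fun w hw => ?_⟩
      obtain ⟨h1, hw2⟩ := hw
      obtain ⟨h2, hw3⟩ := hw2
      obtain ⟨h3, h4⟩ := hw3
      rw [Metric.mem_closedBall, dist_zero_right]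
      have hsum1 : (∑ i, |w.1 i|) + (∑ j, |w.2.1 j|) + (∑ i, |w.2.2 i|) = 1 := h4
      have hs1 : (0:ℝ) ≤ ∑ i, |w.1 i| := Finset.sum_nonneg fun i _ => abs_nonneg _
      have hs2 : (0:ℝ) ≤ ∑ j, |w.2.1 j| := Finset.sum_nonneg fun j _ => abs_nonneg _
      have hs3 : (0:ℝ) ≤ ∑ i, |w.2.2 i| := Finset.sum_nonneg fun i _ => abs_nonneg _
      have hb1 : ∀ i, |w.1 i| ≤ 1 := fun i => by
        have := Finset.single_le_sum (fun j _ => abs_nonneg (w.1 j)) (Finset.mem_univ i)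
        linarith
      have hb2 : ∀ j, |w.2.1 j| ≤ 1 := fun j => by
        have := Finset.single_le_sum (fun k _ => abs_nonneg (w.2.1 k)) (Finset.mem_univ j)
        linarith
      have hb3 : ∀ i, |w.2.2 i| ≤ 1 := fun i => by
        have := Finset.single_le_sum (fun j _ => abs_nonneg (w.2.2 j)) (Finset.mem_univ i)
        linarith
      rw [norm_prod_le_iff]
      constructor
      · rw [pi_norm_le_iff_of_nonneg zero_le_one]
        intro i; rw [Real.norm_eq_abs]; exact hb1 i
      rw [norm_prod_le_iff]
      constructor
      · rw [pi_norm_le_iff_of_nonneg zero_le_one]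
        intro j; rw [Real.norm_eq_abs]; exact hb2 j
      · rw [pi_norm_le_iff_of_nonneg zero_le_one]
        intro i; rw [Real.norm_eq_abs]; exact hb3 i
    have hcompact : IsCompact S := Metric.isCompact_of_isClosed_isBounded hclosed hbdd
    obtain ⟨w0, hw0S, hw0min⟩ := hcompact.exists_isMinOn hSne (hΦcont.norm.continuousOn)
    refine ⟨‖Φ w0‖, ?_, fun w hw => hw0min hw⟩
    rcases (norm_nonneg (Φ w0)).lt_or_eq with hlt | heq
    · exact hlt
    exfalso
    have hΦ0 : Φ w0 = 0 := by rwa [eq_comm, norm_eq_zero] at heq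
    obtain ⟨h1, hw2⟩ := hw0S
    obtain ⟨h2, hw3⟩ := hw2
    obtain ⟨h3, h4⟩ := hw3
    obtain ⟨hl0, hm0, hg0⟩ := hmfcq w0.1 w0.2.1 w0.2.2 h1 h2 h3 hΦ0
    have : N w0 = 0 := by
      rw [hN]; simp only [hl0, hm0, hg0, Pi.zero_apply, abs_zero, Finset.sum_const_zero]; ring
    rw [h4] at this; exact (one_ne_zero : (1:ℝ) ≠ 0) this
  obtain ⟨c0, hc0pos, hc0⟩ := key
  refine ⟨c0, hc0pos, fun lam mu gam hl hls hgs => ?_⟩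
  set w : V := (lam, mu, gam) with hw
  set t : ℝ := N w with ht
  have htnn : 0 ≤ t := by
    refine add_nonneg (add_nonneg ?_ ?_) ?_ <;>
      exact Finset.sum_nonneg fun i _ => abs_nonneg _
  rcases htnn.lt_or_eq with htpos | htzero
  · have hmem : t⁻¹ • w ∈ S := by
      refine ⟨fun i => ?_, fun i hi => ?_, fun i hi => ?_, ?_⟩
      · rw [hc1]; exact mul_nonneg (inv_nonneg.mpr htnn) (hl i)
      · rw [hc1, show w.1 i = lam i from rfl, hls i hi, mul_zero]
      · rw [hc3, show w.2.2 i = gam i from rfl, hgs i hi, mul_zero]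
      · show N (t⁻¹ • w) = 1
        rw [hNsmul t⁻¹ w (inv_nonneg.mpr htnn), ← ht, inv_mul_cancel₀ (ne_of_gt htpos)]
    have := hc0 _ hmem
    rw [hΦsmul, norm_smul, Real.norm_eq_abs, abs_of_nonneg (inv_nonneg.mpr htnn)] at this
    have h3 : (t⁻¹ * ‖Φ w‖) * t = ‖Φ w‖ := by
      field_simp
    have h4 := mul_le_mul_of_nonneg_right this htnn
    rw [h3] at h4
    exact h4
  · show c0 * t ≤ ‖Φ w‖
    rw [← htzero, mul_zero]
    exact norm_nonneg _

end auxiliary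
set_option maxHeartbeats 1000000 in
/-- local exactness of the penalty approach under SP-MFCQ. -/
theorem stmt_15 {n m q : ℕ} (hn : 1 ≤ n) {ρ : ℝ} (hρ : 0 < ρ)
    (f : E n → ℝ) (g : Fin m → E n → ℝ) (h : Fin q → E n → ℝ)
    (hf : ContDiff ℝ 1 f) (hg : ∀ i, ContDiff ℝ 1 (g i)) (hh : ∀ j, ContDiff ℝ 1 (h j))
    (p : Fin n → ℝ → ℝ) (s : Fin n → ℝ)
    (hp : ∀ i, ContDiff ℝ 1 (p i))
    (hconv : ∀ i, ConvexOn ℝ Set.univ (p i))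
    (hspos : ∀ i, 0 < s i)
    (hmin : ∀ i t, p i (s i) ≤ p i t)
    (hstrict : ∀ i t, t ≠ s i → p i (s i) < p i t)
    (hscale : ∀ i, p i 0 - p i (s i) = ρ)
    (xstar ystar : E n)
    (hKKT : KKTcp f g h p xstar ystar)
    (hmfcq : SPMFCQ g h xstar) :
    ∃ αstar > (0 : ℝ), ∃ ε > (0 : ℝ), ∀ α ≥ αstar, ∀ x y : E n,
      ‖(x, y) - (xstar, ystar)‖ < ε →
      KKTpen f g h p α x y → KKTcp f g h p x y := by
  classical
  obtain ⟨hgle, hheq, hxs, hys, hcompS, lam0, mu0, nx0, ny0, gam0, hlam0, hlamg0, hnx0,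
    hnxx0, hny0, hnyy0, heq10, heq20⟩ := hKKT
  -- The derivative of each pᵢ is negative at 0.
  have hpd0 : ∀ i, deriv (p i) 0 < 0 := by
    intro i
    have h1 := (hconv i).deriv_le_slope (Set.mem_univ 0) (Set.mem_univ (s i)) (hspos i)
      (((hp i).differentiable one_ne_zero).differentiableAt)
    rw [slope_def_field] at h1
    have h2 : (p i (s i) - p i 0) / (s i - 0) < 0 := by
      apply div_neg_of_neg_of_pos
      · have := hscale i; linarith
      · linarith [hspos i]
    linarith
  -- No index can have both xstar and ystar coordinates zero.
  have hAB : ∀ i, xstar i ≠ 0 ∨ ystar i ≠ 0 := by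
    intro i
    by_contra hc
    push_neg at hc
    obtain ⟨hx0', hy0'⟩ := hc
    have h1 := heq20 i
    rw [hx0', hy0'] at h1
    have := hny0 i
    have := hpd0 i
    linarith
  have hxpos' : ∀ i, xstar i ≠ 0 → 0 < xstar i := fun i hi => (hxs i).lt_of_ne (Ne.symm hi)
  have hypos' : ∀ i, ystar i ≠ 0 → 0 < ystar i := fun i hi => (hys i).lt_of_ne (Ne.symm hi)
  obtain ⟨c0, hc0pos, hkey⟩ := aux_exists_c0 g h xstar hmfcq
  set C : ℝ := ‖gradient f xstar‖ + 1 with hCdef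
  have hCpos : 0 < C := by positivity
  set M : Fin n → ℝ := fun i => |deriv (p i) (ystar i)| + 1 with hMdef
  have hMpos : ∀ i, 0 < M i := fun i => by positivity
  set Acoef : Fin n → ℝ := fun i => if xstar i = 0 then 0 else 2 * M i / xstar i with hAdef
  set Bcoef : Fin n → ℝ := fun i => if ystar i = 0 then 0 else 4 * C / (c0 * ystar i) with hBdef
  have hAnn : ∀ i, 0 ≤ Acoef i := by
    intro i
    by_cases hi : xstar i = 0
    · simp [hAdef, hi]
    · simp only [hAdef, if_neg hi]
      exact div_nonneg (by linarith [hMpos i]) (hxpos' i hi).le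
  have hBnn : ∀ i, 0 ≤ Bcoef i := by
    intro i
    by_cases hi : ystar i = 0
    · simp [hBdef, hi]
    · simp only [hBdef, if_neg hi]
      exact div_nonneg (by linarith) (mul_nonneg hc0pos.le (hypos' i hi).le)
  set αstar : ℝ := 1 + (∑ i, Acoef i) + (∑ i, Bcoef i) with hαdef
  have hsumA : (0:ℝ) ≤ ∑ i, Acoef i := Finset.sum_nonneg fun i _ => hAnn i
  have hsumB : (0:ℝ) ≤ ∑ i, Bcoef i := Finset.sum_nonneg fun i _ => hBnn i
  have hαpos : 0 < αstar := by rw [hαdef]; linarith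
  -- the collection of "closeness" conditions, satisfied near (xstar, ystar)
  have hco1 : ∀ k : Fin n, Continuous (fun z : E n × E n => z.1 k) := fun k =>
    (continuous_apply k).comp ((PiLp.continuous_ofLp 2 _).comp continuous_fst)
  have hco2 : ∀ k : Fin n, Continuous (fun z : E n × E n => z.2 k) := fun k =>
    (continuous_apply k).comp ((PiLp.continuous_ofLp 2 _).comp continuous_snd)
  have hev : ∀ᶠ z : E n × E n in 𝓝 (xstar, ystar),
      (∀ i, ‖gradient (g i) z.1 - gradient (g i) xstar‖ ≤ c0/2) ∧
      (∀ j, ‖gradient (h j) z.1 - gradient (h j) xstar‖ ≤ c0/2) ∧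
      (‖gradient f z.1‖ ≤ C) ∧
      (∀ i, g i xstar ≠ 0 → g i z.1 < 0) ∧
      (∀ i, |deriv (p i) (z.2 i)| ≤ M i) ∧
      (∀ i, xstar i ≠ 0 → xstar i / 2 ≤ z.1 i) ∧
      (∀ i, ystar i ≠ 0 → ystar i / 2 ≤ z.2 i) := by
    refine Filter.Eventually.and ?_ (Filter.Eventually.and ?_ (Filter.Eventually.and ?_
      (Filter.Eventually.and ?_ (Filter.Eventually.and ?_ (Filter.Eventually.and ?_ ?_)))))
    · rw [eventually_all]
      intro i
      have hc : Continuous (fun z : E n × E n => ‖gradient (g i) z.1 - gradient (g i) xstar‖) :=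
        (((aux_grad_cont (hg i)).comp continuous_fst).sub continuous_const).norm
      have := (hc.tendsto (xstar, ystar)).eventually_lt_const
        (show ‖gradient (g i) xstar - gradient (g i) xstar‖ < c0/2 by simp; linarith)
      exact this.mono fun z hz => hz.le
    · rw [eventually_all]
      intro j
      have hc : Continuous (fun z : E n × E n => ‖gradient (h j) z.1 - gradient (h j) xstar‖) :=
        (((aux_grad_cont (hh j)).comp continuous_fst).sub continuous_const).norm
      have := (hc.tendsto (xstar, ystar)).eventually_lt_const
        (show ‖gradient (h j) xstar - gradient (h j) xstar‖ < c0/2 by simp; linarith)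
      exact this.mono fun z hz => hz.le
    · have hc : Continuous (fun z : E n × E n => ‖gradient f z.1‖) :=
        ((aux_grad_cont hf).comp continuous_fst).norm
      have := (hc.tendsto (xstar, ystar)).eventually_lt_const
        (show ‖gradient f xstar‖ < C by rw [hCdef]; linarith)
      exact this.mono fun z hz => hz.le
    · rw [eventually_all]
      intro i
      by_cases hi : g i xstar = 0
      · exact Filter.Eventually.of_forall fun z hz => absurd hi hz
      · have hgi : g i xstar < 0 := (hgle i).lt_of_ne hi
        have hc : Continuous (fun z : E n × E n => g i z.1) :=
          ((hg i).continuous).comp continuous_fst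
        have := (hc.tendsto (xstar, ystar)).eventually_lt_const hgi
        exact this.mono fun z hz _ => hz
    · rw [eventually_all]
      intro i
      have hc : Continuous (fun z : E n × E n => |deriv (p i) (z.2 i)|) :=
        (((hp i).continuous_deriv le_rfl).comp (hco2 i)).abs
      have := (hc.tendsto (xstar, ystar)).eventually_lt_const
        (show |deriv (p i) (ystar i)| < M i by simp only [hMdef]; linarith)
      exact this.mono fun z hz => hz.le
    · rw [eventually_all]
      intro i
      by_cases hi : xstar i = 0
      · exact Filter.Eventually.of_forall fun z hz => absurd hi hz
      · have := ((hco1 i).tendsto (xstar, ystar)).eventually_const_lt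
          (show xstar i / 2 < xstar i by linarith [hxpos' i hi])
        exact this.mono fun z hz _ => hz.le
    · rw [eventually_all]
      intro i
      by_cases hi : ystar i = 0
      · exact Filter.Eventually.of_forall fun z hz => absurd hi hz
      · have := ((hco2 i).tendsto (xstar, ystar)).eventually_const_lt
          (show ystar i / 2 < ystar i by linarith [hypos' i hi])
        exact this.mono fun z hz _ => hz.le
  rw [Metric.eventually_nhds_iff] at hev
  obtain ⟨ε, hεpos, hball⟩ := hev
  refine ⟨αstar, hαpos, ε, hεpos, fun α hα x y hxy hpen => ?_⟩
  have hz := hball (show dist (x, y) (xstar, ystar) < ε by rwa [dist_eq_norm])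
  obtain ⟨E1, E2, E3, E4, E5, E6, E7⟩ := hz
  obtain ⟨hgx, hhx, hx0, hy0, lam, mu, nx, ny, hlamnn, hlamg, hnxnn, hnxx, hnynn, hnyy,
    heq1, heq2⟩ := hpen
  have hα0 : 0 < α := lt_of_lt_of_le hαpos hα
  -- Step 1: for every index with xstar j ≠ 0, we get y j = 0.
  have hA : ∀ j, xstar j ≠ 0 → y j = 0 := by
    intro j hj
    by_contra hyj
    have hyj' : 0 < y j := (hy0 j).lt_of_ne (Ne.symm hyj)
    have hnyj : ny j = 0 := (mul_eq_zero.mp (hnyy j)).resolve_right hyj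
    have he2 := heq2 j
    have hb : α * x j ≤ M j := by
      have h1 : α * x j = ny j - deriv (p j) (y j) := by linarith
      have h2 : -deriv (p j) (y j) ≤ |deriv (p j) (y j)| := neg_le_abs _
      have h3 := E5 j
      linarith
    have hxj : xstar j / 2 ≤ x j := E6 j hj
    have hxjp : 0 < xstar j := hxpos' j hj
    have hαle : α ≤ Acoef j := by
      have h4 : α * xstar j ≤ 2 * M j := by
        nlinarith [mul_le_mul_of_nonneg_left hxj hα0.le]
      simp only [hAdef, if_neg hj]
      rw [le_div_iff₀ hxjp]
      linarith
    have h5 : Acoef j ≤ ∑ i, Acoef i := Finset.single_le_sum (fun i _ => hAnn i)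
      (Finset.mem_univ j)
    have h6 : αstar ≤ α := hα
    rw [hαdef] at h6
    linarith
  -- Step 2: complementarity.
  have hcomp : ∀ i, x i * y i = 0 := by
    intro i
    by_contra hne
    have hxi : 0 < x i := (hx0 i).lt_of_ne (Ne.symm (left_ne_zero_of_mul hne))
    have hyi : 0 < y i := (hy0 i).lt_of_ne (Ne.symm (right_ne_zero_of_mul hne))
    rcases hAB i with hxsi | hysi
    · exact (right_ne_zero_of_mul hne) (hA i hxsi)
    -- the hard case: ystar i ≠ 0
    have hnxi : nx i = 0 := (mul_eq_zero.mp (hnxx i)).resolve_right (ne_of_gt hxi)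
    set v : Fin n → ℝ := fun k => α * y k - nx k with hvdef
    have hvsupp : ∀ k, xstar k ≠ 0 → v k = 0 := by
      intro k hk
      have hyk := hA k hk
      have hxk : 0 < x k := lt_of_lt_of_le (half_pos (hxpos' k hk)) (E6 k hk)
      have hnxk : nx k = 0 := (mul_eq_zero.mp (hnxx k)).resolve_right (ne_of_gt hxk)
      simp [hvdef, hyk, hnxk]
    have hlsupp : ∀ k, g k xstar ≠ 0 → lam k = 0 := fun k hk =>
      (mul_eq_zero.mp (hlamg k)).resolve_right (ne_of_lt (E4 k hk))
    -- the vector form of the stationarity equation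
    have hvec : (∑ k, lam k • gradient (g k) x) + (∑ j, mu j • gradient (h j) x) +
        (∑ k, v k • (EuclideanSpace.single k (1:ℝ) : E n)) = - gradient f x := by
      ext k'
      rw [PiLp.add_apply, PiLp.add_apply, PiLp.neg_apply, aux_sum_smul_apply,
        aux_sum_smul_apply, aux_sum_smul_apply]
      have hsingle : ∑ k, v k * (EuclideanSpace.single k (1:ℝ) : E n) k' = v k' := by
        have : ∀ k, v k * (EuclideanSpace.single k (1:ℝ) : E n) k'
            = if k' = k then v k else 0 := by
          intro k
          rw [EuclideanSpace.single_apply]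
          by_cases hkk : k' = k <;> simp [hkk]
        rw [Finset.sum_congr rfl fun k _ => this k, Finset.sum_ite_eq]
        simp
      rw [hsingle]
      have := heq1 k'
      simp only [hvdef]
      linarith
    -- Norm estimates bound the total multiplier mass
    set Ntot : ℝ := (∑ k, |lam k|) + (∑ j, |mu j|) + (∑ k, |v k|) with hNtot
    have hkey' := hkey lam mu v hlamnn hlsupp hvsupp
    -- compare the combination at xstar with the one at x
    set Φs : E n := (∑ k, lam k • gradient (g k) xstar) + (∑ j, mu j • gradient (h j) xstar) +
      (∑ k, v k • (EuclideanSpace.single k (1:ℝ) : E n)) with hΦs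
    set Φx : E n := (∑ k, lam k • gradient (g k) x) + (∑ j, mu j • gradient (h j) x) +
      (∑ k, v k • (EuclideanSpace.single k (1:ℝ) : E n)) with hΦx
    have hΦxnorm : ‖Φx‖ ≤ C := by rw [hvec, norm_neg]; exact E3
    have hdiffeq : Φs - Φx = (∑ k, lam k • (gradient (g k) xstar - gradient (g k) x)) +
        (∑ j, mu j • (gradient (h j) xstar - gradient (h j) x)) := by
      rw [hΦs, hΦx]
      simp only [smul_sub, Finset.sum_sub_distrib]
      abel
    have hdiffnorm : ‖Φs - Φx‖ ≤ (c0/2) * ((∑ k, |lam k|) + (∑ j, |mu j|)) := by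
      rw [hdiffeq]
      refine le_trans (norm_add_le _ _) ?_
      have hb1 : ‖∑ k, lam k • (gradient (g k) xstar - gradient (g k) x)‖
          ≤ (∑ k, |lam k|) * (c0/2) := by
        refine le_trans (norm_sum_le _ _) ?_
        rw [Finset.sum_mul]
        refine Finset.sum_le_sum fun k _ => ?_
        rw [norm_smul, Real.norm_eq_abs]
        refine mul_le_mul_of_nonneg_left ?_ (abs_nonneg _)
        rw [norm_sub_rev]
        exact E1 k
      have hb2 : ‖∑ j, mu j • (gradient (h j) xstar - gradient (h j) x)‖
          ≤ (∑ j, |mu j|) * (c0/2) := by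
        refine le_trans (norm_sum_le _ _) ?_
        rw [Finset.sum_mul]
        refine Finset.sum_le_sum fun j _ => ?_
        rw [norm_smul, Real.norm_eq_abs]
        refine mul_le_mul_of_nonneg_left ?_ (abs_nonneg _)
        rw [norm_sub_rev]
        exact E2 j
      linarith
    have hΦsnorm : ‖Φs‖ ≤ C + (c0/2) * ((∑ k, |lam k|) + (∑ j, |mu j|)) := by
      calc ‖Φs‖ = ‖Φx + (Φs - Φx)‖ := by rw [add_sub_cancel]
        _ ≤ ‖Φx‖ + ‖Φs - Φx‖ := norm_add_le _ _
        _ ≤ C + (c0/2) * ((∑ k, |lam k|) + (∑ j, |mu j|)) := add_le_add hΦxnorm hdiffnorm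
    have hsv : (0:ℝ) ≤ ∑ k, |v k| := Finset.sum_nonneg fun k _ => abs_nonneg _
    have hsl : (0:ℝ) ≤ ∑ k, |lam k| := Finset.sum_nonneg fun k _ => abs_nonneg _
    have hsm : (0:ℝ) ≤ ∑ j, |mu j| := Finset.sum_nonneg fun j _ => abs_nonneg _
    have hNbound : Ntot ≤ 2 * C / c0 := by
      have h1 : c0 * Ntot ≤ C + (c0/2) * Ntot := by
        have : (c0/2) * ((∑ k, |lam k|) + (∑ j, |mu j|)) ≤ (c0/2) * Ntot := by
          apply mul_le_mul_of_nonneg_left _ (by linarith)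
          rw [hNtot]; linarith
        calc c0 * Ntot ≤ ‖Φs‖ := hkey'
          _ ≤ C + (c0/2) * ((∑ k, |lam k|) + (∑ j, |mu j|)) := hΦsnorm
          _ ≤ C + (c0/2) * Ntot := by linarith
      rw [le_div_iff₀ hc0pos]
      have hcm : Ntot * c0 = c0 * Ntot := mul_comm _ _
      have h7 : (c0/2) * Ntot = (1/2) * (c0 * Ntot) := by ring
      nlinarith [h1, h7, hcm]
    -- conclude a bound on α, contradicting α ≥ αstar
    have hvi : v i = α * y i := by
      simp only [hvdef]
      rw [hnxi]
      ring
    have hvile : v i ≤ Ntot := by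
      have h1 : |v i| ≤ ∑ k, |v k| :=
        Finset.single_le_sum (fun k _ => abs_nonneg (v k)) (Finset.mem_univ i)
      have h2 := le_abs_self (v i)
      rw [hNtot]; linarith
    have hyilb : ystar i / 2 ≤ y i := E7 i hysi
    have hyip : 0 < ystar i := hypos' i hysi
    have hαB : α ≤ Bcoef i := by
      simp only [hBdef, if_neg hyip.ne']
      rw [le_div_iff₀ (mul_pos hc0pos hyip)]
      have h1 : α * (ystar i / 2) ≤ α * y i := mul_le_mul_of_nonneg_left hyilb hα0.le
      have h2 : α * y i ≤ 2 * C / c0 := by rw [← hvi]; linarith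
      have h3 : α * (ystar i / 2) ≤ 2 * C / c0 := le_trans h1 h2
      have h4 : (2 * C / c0) * c0 = 2 * C := by field_simp
      nlinarith
    have h5 : Bcoef i ≤ ∑ k, Bcoef k := Finset.single_le_sum (fun k _ => hBnn k)
      (Finset.mem_univ i)
    have h6 : αstar ≤ α := hα
    rw [hαdef] at h6
    linarith
  -- Step 3: assemble the KKT point of (SPOcp)
  refine ⟨hgx, hhx, hx0, hy0, hcomp, lam, mu, nx, ny, fun _ => α, hlamnn, hlamg, hnxnn, hnxx,
    hnynn, hnyy, fun k => ?_, fun i => ?_⟩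
  · have := heq1 k; linarith
  · have := heq2 i; linarith
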